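/- Let y : ℝ → ℝ^{n·N_p} solve the Galerkin-reduced MPDE system 𝒜 y' + ℬ y = 𝒞(t₁) with 𝒜 = A ⊗ J and ℬ = B ⊗ J + A ⊗ Q, where J is symmetric positive definite, Q is skew-symmetric, A is symmetric positive definite, and the symmetric part of B is positive semidefinite. If 𝒞 ≡ 0 then the energy E(t) = y(t)ᵀ 𝒜 y(t) is non-increasing. -/

import Mathlib

open Matrix
open scoped Kronecker

private lemma kron_psd {n m : Type*} [Fintype n] [Fintype m] [DecidableEq n] [DecidableEq m]
    {P : Matrix n n ℝ} {J : Matrix m m ℝ} (hP : P.PosSemidef) (hJ : J.PosSemidef) :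
    (P ⊗ₖ J).PosSemidef := by
  exact hP.kronecker hJ

private lemma dot_swap {k : Type*} [Fintype k] (M : Matrix k k ℝ) (u v : k → ℝ) :
    u ⬝ᵥ M.mulVec v = v ⬝ᵥ Mᵀ.mulVec u := by
  rw [Matrix.dotProduct_mulVec, dotProduct_comm, Matrix.mulVec_transpose]

theorem mpde_galerkin_energy_decay (n Np : ℕ)
    (A B : Matrix (Fin n) (Fin n) ℝ) (J Q : Matrix (Fin Np) (Fin Np) ℝ)
    (hA : A.PosDef) (hJ : J.PosDef) (hQ : Qᵀ = -Q)
    (hB : ((1/2 : ℝ) • (B + Bᵀ)).PosSemidef)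
    (𝒜 ℬ : Matrix (Fin n × Fin Np) (Fin n × Fin Np) ℝ)
    (h𝒜 : 𝒜 = A ⊗ₖ J) (hℬ : ℬ = B ⊗ₖ J + A ⊗ₖ Q)
    (y : ℝ → (Fin n × Fin Np → ℝ)) (hy : Differentiable ℝ y)
    (hode : ∀ t, 𝒜.mulVec (deriv y t) + ℬ.mulVec (y t) = 0)
    (E : ℝ → ℝ) (hE : ∀ t, E t = y t ⬝ᵥ 𝒜.mulVec (y t)) :
    Antitone E := by
  have hAT : Aᵀ = A := by
    have h : Aᴴ = A := hA.isHermitian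
    rwa [Matrix.conjTranspose_eq_transpose_of_trivial] at h
  have hJT : Jᵀ = J := by
    have h : Jᴴ = J := hJ.isHermitian
    rwa [Matrix.conjTranspose_eq_transpose_of_trivial] at h
  have h𝒜T : 𝒜ᵀ = 𝒜 := by
    rw [h𝒜, ← Matrix.kroneckerMap_transpose, hAT, hJT]
  -- derivative of E
  have hEfun : E = fun t => y t ⬝ᵥ 𝒜.mulVec (y t) := funext hE
  have hder : ∀ t, HasDerivAt E
      (deriv y t ⬝ᵥ 𝒜.mulVec (y t) + y t ⬝ᵥ 𝒜.mulVec (deriv y t)) t := by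
    intro t
    have h1 : ∀ i, HasDerivAt (fun s => y s i) (deriv y t i) t :=
      hasDerivAt_pi.mp (hy t).hasDerivAt
    have := HasDerivAt.fun_sum (u := Finset.univ)
      (A := fun (i : Fin n × Fin Np) s => y s i * ∑ j, 𝒜 i j * y s j)
      (A' := fun i => deriv y t i * (∑ j, 𝒜 i j * y t j)
        + y t i * ∑ j, 𝒜 i j * deriv y t j)
      (fun i _ => (h1 i).mul (HasDerivAt.fun_sum fun j _ => (h1 j).const_mul (𝒜 i j)))
    rw [hEfun]
    simpa [dotProduct, Matrix.mulVec, Finset.sum_add_distrib] using this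
  have hdiff : Differentiable ℝ E := fun t => (hder t).differentiableAt
  apply antitone_of_deriv_nonpos hdiff
  intro t
  rw [(hder t).deriv]
  -- symmetry of 𝒜
  have hswap : deriv y t ⬝ᵥ 𝒜.mulVec (y t) = y t ⬝ᵥ 𝒜.mulVec (deriv y t) := by
    rw [dot_swap, h𝒜T]
  -- use the ODE
  have hodet : 𝒜.mulVec (deriv y t) = -ℬ.mulVec (y t) := by
    have := hode t; linear_combination (norm := module) this
  rw [hswap, hodet]
  have key : 0 ≤ y t ⬝ᵥ ℬ.mulVec (y t) := by
    have hS : ((1/2 : ℝ) • (ℬ + ℬᵀ)).PosSemidef := by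
      have hℬT : ℬᵀ = Bᵀ ⊗ₖ J + -(A ⊗ₖ Q) := by
        rw [hℬ, Matrix.transpose_add, ← Matrix.kroneckerMap_transpose,
          ← Matrix.kroneckerMap_transpose, hAT, hJT, hQ]
        congr 1
        ext ⟨i, j⟩ ⟨k, l⟩
        simp [Matrix.kroneckerMap_apply]
      have hsum : ℬ + ℬᵀ = (B + Bᵀ) ⊗ₖ J := by
        rw [hℬT, hℬ, Matrix.add_kronecker]
        abel
      rw [hsum, ← Matrix.smul_kronecker]
      exact kron_psd hB hJ.posSemidef
    have h0 := hS.dotProduct_mulVec_nonneg (y t)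
    simp only [Matrix.smul_mulVec, Matrix.add_mulVec, dotProduct_smul,
      dotProduct_add, smul_eq_mul] at h0
    have hBsw : y t ⬝ᵥ ℬᵀ.mulVec (y t) = y t ⬝ᵥ ℬ.mulVec (y t) := by
      rw [dot_swap, Matrix.transpose_transpose]
    simp only [star_trivial] at h0
    rw [hBsw] at h0
    nlinarith [h0]
  have : y t ⬝ᵥ (-ℬ.mulVec (y t)) = -(y t ⬝ᵥ ℬ.mulVec (y t)) := by
    simp [dotProduct_neg]
  rw [this]
  linarith
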